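/- A finite nonempty sequence l = (l_1, ..., l_n) of positive integers with Kraft sum Σ 2^{-l_k} = 1 is the left-to-right path-length sequence of some topological binary tree if and only if for every full segment S = [i,j] of l, the number 2^{m(S)} · K(S) is an integer. -/

import Mathlib

/-- Minimum of the values `l i, ..., l j`. -/
def segMin (l : ℕ → ℕ) (i j : ℕ) : ℕ :=
  (Finset.Icc i j).fold min (l i) l

/-- Neighborhood maximin parameter `m[i,j]`: the maximum of `min(l h, ..., l k)` over
subintervals `[h,k]` of `[1,n]` properly containing `[i,j]`, with value `0` if there
are none (in particular for `[i,j] = [1,n]`). -/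
def nmaxim (l : ℕ → ℕ) (n i j : ℕ) : ℕ :=
  (((Finset.Icc 1 i) ×ˢ (Finset.Icc j n)).filter (fun p => p ≠ (i, j))).fold max 0
    (fun p => segMin l p.1 p.2)

/-- `[i,j]` is a full segment (island) of the sequence `l` restricted to `[1,n]`. -/
def IsFullSeg (l : ℕ → ℕ) (n i j : ℕ) : Prop :=
  1 ≤ i ∧ i ≤ j ∧ j ≤ n ∧ nmaxim l n i j < segMin l i j

/-- Partial Kraft sum `K[i,j] = 2^{-l_i} + ... + 2^{-l_j}`. -/
noncomputable def kraft (l : ℕ → ℕ) (i j : ℕ) : ℝ :=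
  ∑ k ∈ Finset.Icc i j, ((2:ℝ) ^ (l k))⁻¹

/-- A topological binary tree: every internal node has exactly a left and a right son. -/
inductive BTree : Type
  | leaf : BTree
  | node : BTree → BTree → BTree

/-- The left-to-right (topologically ordered) path-length sequence: depths of leaves. -/
def BTree.depths : BTree → List ℕ
  | .leaf => [0]
  | .node L R => (L.depths.map (· + 1)) ++ (R.depths.map (· + 1))

/-- The codewords of the leaves in left-to-right order (`false` = 0 = left, `true` = 1 = right). -/
def BTree.codes : BTree → List (List Bool)
  | .leaf => [[]]
  | .node L R => (L.codes.map (List.cons false)) ++ (R.codes.map (List.cons true))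

noncomputable def kraftL (d : List ℕ) : ℝ := (d.map (fun k => ((2:ℝ)^k)⁻¹)).sum

lemma kraftL_nil : kraftL [] = 0 := rfl

lemma kraftL_append (a b : List ℕ) : kraftL (a ++ b) = kraftL a + kraftL b := by
  simp [kraftL]

lemma kraftL_cons (x : ℕ) (d : List ℕ) : kraftL (x :: d) = ((2:ℝ)^x)⁻¹ + kraftL d := by
  simp [kraftL]

lemma kraftL_map_succ (d : List ℕ) : kraftL (d.map (· + 1)) = 2⁻¹ * kraftL d := by
  induction d with
  | nil => simp [kraftL]
  | cons x d ih => simp only [List.map_cons, kraftL_cons, ih]; ring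

lemma kraftL_nonneg (d : List ℕ) : 0 ≤ kraftL d := by
  induction d with
  | nil => simp [kraftL]
  | cons x d ih => rw [kraftL_cons]; positivity

lemma kraftL_pos (d : List ℕ) (h : d ≠ []) : 0 < kraftL d := by
  cases d with
  | nil => simp at h
  | cons x d => rw [kraftL_cons]; have := kraftL_nonneg d; positivity

lemma depths_ne_nil (t : BTree) : t.depths ≠ [] := by
  induction t with
  | leaf => simp [BTree.depths]
  | node L R ihL ihR => simp [BTree.depths, ihL]

lemma depths_kraftL (t : BTree) : kraftL t.depths = 1 := by
  induction t with
  | leaf => simp [BTree.depths, kraftL]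
  | node L R ihL ihR =>
      simp [BTree.depths, kraftL_append, kraftL_map_succ, ihL, ihR]
      norm_num

lemma depths_prefix (t : BTree) : ∀ p, (hp : p < t.depths.length) →
    ∃ z : ℤ, (2:ℝ)^(t.depths[p]) * kraftL (t.depths.take p) = z := by
  induction t with
  | leaf =>
      intro p hp
      simp [BTree.depths] at hp
      subst hp
      exact ⟨0, by simp [BTree.depths, kraftL]⟩
  | node L R ihL ihR =>
      intro p hp
      simp only [BTree.depths, List.length_append, List.length_map] at hp
      by_cases h : p < L.depths.length
      · obtain ⟨z, hz⟩ := ihL p h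
        refine ⟨z, ?_⟩
        simp only [BTree.depths]
        rw [List.getElem_append_left (by simpa using h), List.getElem_map,
          List.take_append_of_le_length (by simpa using h.le), ← List.map_take,
          kraftL_map_succ]
        rw [← hz]; ring
      · push_neg at h
        have h2 : p - L.depths.length < R.depths.length := by omega
        obtain ⟨z, hz⟩ := ihR _ h2
        refine ⟨2 ^ (R.depths[p - L.depths.length]) + z, ?_⟩
        simp only [BTree.depths]
        rw [List.getElem_append_right (by simpa using h)]
        rw [List.take_append, List.take_of_length_le (by simpa using h),
          ← List.map_take, kraftL_append, kraftL_map_succ, kraftL_map_succ]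
        simp only [List.length_map, List.getElem_map]
        have hL1 : kraftL L.depths = 1 := depths_kraftL L
        rw [hL1]
        push_cast
        rw [← hz]
        ring

lemma kraftL_perm {d d' : List ℕ} (h : d.Perm d') : kraftL d = kraftL d' :=
  (h.map _).sum_eq

lemma kraftL_take_succ (d : List ℕ) (p : ℕ) (hp : p < d.length) :
    kraftL (d.take (p+1)) = kraftL (d.take p) + ((2:ℝ)^(d[p]))⁻¹ := by
  rw [kraftL, kraftL, List.map_take, List.map_take,
    List.sum_take_succ _ p (by simpa using hp), List.getElem_map]

lemma kraftL_drop (d : List ℕ) (m : ℕ) :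
    kraftL (d.drop m) = kraftL d - kraftL (d.take m) := by
  have := kraftL_append (d.take m) (d.drop m)
  rw [List.take_append_drop] at this
  linarith

lemma entries_pos (d : List ℕ) (hk : kraftL d = 1) (hlen : 2 ≤ d.length) :
    ∀ x ∈ d, 1 ≤ x := by
  intro x hx
  by_contra h
  push_neg at h
  have hx0 : x = 0 := by omega
  subst hx0
  have hperm := List.perm_cons_erase hx
  have h1 : kraftL d = 1 + kraftL (d.erase 0) := by
    rw [kraftL_perm hperm, kraftL_cons]; norm_num
  have h2 : d.erase 0 ≠ [] := by
    have := List.length_erase_of_mem hx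
    intro hE; rw [hE] at this; simp at this; omega
  have := kraftL_pos _ h2
  rw [hk] at h1
  linarith

lemma kraftL_map_pred (d : List ℕ) (h : ∀ x ∈ d, 1 ≤ x) :
    kraftL (d.map (· - 1)) = 2 * kraftL d := by
  induction d with
  | nil => simp [kraftL]
  | cons x d ih =>
      simp only [List.map_cons, kraftL_cons]
      rw [ih (fun y hy => h y (List.mem_cons_of_mem _ hy))]
      have hx : 1 ≤ x := h x (List.mem_cons_self)
      have : (2:ℝ)^x = 2 * 2^(x-1) := by
        rw [← pow_succ']
        congr 1
        omega
      rw [this]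
      have : (2:ℝ)^(x-1) ≠ 0 := by positivity
      field_simp

lemma map_pred_succ (d : List ℕ) (h : ∀ x ∈ d, 1 ≤ x) :
    (d.map (· - 1)).map (· + 1) = d := by
  induction d with
  | nil => simp
  | cons x d ih =>
      simp only [List.map_cons, List.cons.injEq]
      exact ⟨by have := h x (List.mem_cons_self); omega,
        ih (fun y hy => h y (List.mem_cons_of_mem _ hy))⟩

lemma one_le_getD {d : List ℕ} (hone : ∀ x ∈ d, 1 ≤ x) {i : ℕ} (h : i < d.length) :
    1 ≤ d.getD i 0 := by
  rw [List.getD_eq_getElem _ _ h]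
  exact hone _ (List.getElem_mem h)

lemma kraftL_take_succ' (d : List ℕ) (p : ℕ) (hp : p < d.length) :
    kraftL (d.take (p+1)) = kraftL (d.take p) + ((2:ℝ)^(d.getD p 0))⁻¹ := by
  rw [List.getD_eq_getElem _ _ hp]
  exact kraftL_take_succ d p hp

lemma exists_half_cut (d : List ℕ) (hk : kraftL d = 1) (hlen : 2 ≤ d.length)
    (hC : ∀ p, 1 ≤ p → p < d.length → ∃ z : ℤ,
      (2:ℝ)^(min (d.getD (p-1) 0) (d.getD p 0)) * kraftL (d.take p) = z) :
    ∃ p, 1 ≤ p ∧ p < d.length ∧ kraftL (d.take p) = 1/2 := by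
  have hone : ∀ x ∈ d, 1 ≤ x := entries_pos d hk hlen
  set n := d.length with hn
  set S : Finset ℕ := (Finset.Icc 1 (n - 1)).filter
    (fun p => kraftL (d.take p) ≤ 1/2) with hS
  have h1S : 1 ∈ S := by
    rw [hS, Finset.mem_filter, Finset.mem_Icc]
    refine ⟨⟨le_refl _, by omega⟩, ?_⟩
    have h0 := kraftL_take_succ' d 0 (by omega)
    simp only [List.take_zero, kraftL_nil, zero_add] at h0
    rw [h0]
    have ha : 1 ≤ d.getD 0 0 := one_le_getD hone (by omega)
    have h2 : ((2:ℝ)^(d.getD 0 0))⁻¹ ≤ 1/2 :=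
      calc ((2:ℝ)^(d.getD 0 0))⁻¹ ≤ ((2:ℝ)^1)⁻¹ := by
            apply inv_anti₀ (by norm_num)
            apply pow_le_pow_right₀ (by norm_num) ha
        _ = 1/2 := by norm_num
    linarith
  set p := S.max' ⟨1, h1S⟩ with hp
  have hpS : p ∈ S := S.max'_mem _
  rw [hS, Finset.mem_filter, Finset.mem_Icc] at hpS
  obtain ⟨⟨hp1, hpn⟩, hphalf⟩ := hpS
  refine ⟨p, hp1, by omega, ?_⟩
  by_contra hne
  have hlt : kraftL (d.take p) < 1/2 := lt_of_le_of_ne hphalf hne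
  rcases eq_or_lt_of_le hpn with hpe | hplt
  · have hstep := kraftL_take_succ' d (n-1) (by omega)
    rw [show n - 1 + 1 = n by omega, List.take_of_length_le (by omega), hk] at hstep
    have hb : 1 ≤ d.getD (n-1) 0 := one_le_getD hone (by omega)
    have h2 : ((2:ℝ)^(d.getD (n-1) 0))⁻¹ ≤ 1/2 :=
      calc ((2:ℝ)^(d.getD (n-1) 0))⁻¹ ≤ ((2:ℝ)^1)⁻¹ := by
            apply inv_anti₀ (by norm_num)
            apply pow_le_pow_right₀ (by norm_num) hb
        _ = 1/2 := by norm_num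
    rw [hpe] at hlt
    linarith
  · obtain ⟨z, hz⟩ := hC p hp1 (by omega)
    set v := min (d.getD (p-1) 0) (d.getD p 0) with hv
    have hv1 : 1 ≤ v :=
      le_min (one_le_getD hone (by omega)) (one_le_getD hone (by omega))
    have hKnn : (0:ℝ) ≤ kraftL (d.take p) := kraftL_nonneg _
    have hz0 : (0:ℤ) ≤ z := by
      have : (0:ℝ) ≤ (z:ℝ) := by rw [← hz]; positivity
      exact_mod_cast this
    have h2v : (2:ℝ)^v = 2 * 2^(v-1) := by
      rw [← pow_succ']; congr 1; omega
    have hzlt : (z:ℝ) < 2^(v-1) := by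
      rw [← hz, h2v]
      nlinarith [pow_pos (by norm_num : (0:ℝ) < 2) (v-1)]
    have hzle : (z:ℝ) ≤ 2^(v-1) - 1 := by
      have h1 : z < 2^(v-1) := by exact_mod_cast hzlt
      have h2 : z ≤ 2^(v-1) - 1 := by omega
      calc (z:ℝ) ≤ ((2^(v-1) - 1 : ℤ) : ℝ) := by exact_mod_cast h2
        _ = 2^(v-1) - 1 := by push_cast; ring
    have hKple : kraftL (d.take p) ≤ 1/2 - ((2:ℝ)^v)⁻¹ := by
      have h2vpos : (0:ℝ) < 2^v := by positivity
      rw [← mul_le_mul_iff_right₀ h2vpos]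
      calc (2:ℝ)^v * kraftL (d.take p) = z := hz
        _ ≤ 2^(v-1) - 1 := hzle
        _ ≤ 2^v * (1/2 - ((2:ℝ)^v)⁻¹) := by rw [h2v]; field_simp; exact le_refl _
    have hstep := kraftL_take_succ' d p (by omega)
    have hdpv : ((2:ℝ)^(d.getD p 0))⁻¹ ≤ ((2:ℝ)^v)⁻¹ := by
      apply inv_anti₀ (by positivity)
      apply pow_le_pow_right₀ (by norm_num)
      omega
    have hp1S : p + 1 ∈ S := by
      rw [hS, Finset.mem_filter, Finset.mem_Icc]
      refine ⟨⟨by omega, by omega⟩, by rw [hstep]; linarith⟩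
    have := S.le_max' _ hp1S
    omega

set_option maxHeartbeats 1000000 in
lemma buildTree : ∀ N (d : List ℕ), d.length ≤ N → kraftL d = 1 →
    (∀ p, 1 ≤ p → p < d.length → ∃ z : ℤ,
      (2:ℝ)^(min (d.getD (p-1) 0) (d.getD p 0)) * kraftL (d.take p) = z) →
    ∃ t : BTree, t.depths = d := by
  intro N
  induction N with
  | zero =>
      intro d hd hk _
      have hd0 : d = [] := List.length_eq_zero_iff.mp (by omega)
      rw [hd0] at hk
      simp [kraftL_nil] at hk
  | succ N ih =>
      intro d hd hk hC
      rcases Nat.lt_or_ge d.length 2 with hsmall | hlen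
      · rcases Nat.lt_or_ge d.length 1 with h0 | h1
        · have hd0 : d = [] := List.length_eq_zero_iff.mp (by omega)
          rw [hd0] at hk
          simp [kraftL_nil] at hk
        · obtain ⟨a, ha⟩ := List.length_eq_one_iff.mp (show d.length = 1 by omega)
          rw [ha] at hk
          have h1 : ((2:ℝ)^a)⁻¹ = 1 := by simpa [kraftL] using hk
          have ha0 : a = 0 := by
            by_contra ha0
            have h2 : (2:ℝ)^1 ≤ 2^a := by
              apply pow_le_pow_right₀ (by norm_num)
              omega
            rw [inv_eq_one] at h1
            rw [h1] at h2
            norm_num at h2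
          exact ⟨BTree.leaf, by simp [BTree.depths, ha, ha0]⟩
      · -- main case
        have hone : ∀ x ∈ d, 1 ≤ x := entries_pos d hk hlen
        obtain ⟨p, hp1, hpn', hhalf⟩ := exists_half_cut d hk hlen hC
        have htakelen : (d.take p).length = p := by
          rw [List.length_take]; omega
        have hdroplen : (d.drop p).length = d.length - p := by
          rw [List.length_drop]
        have honetake : ∀ x ∈ d.take p, 1 ≤ x :=
          fun x hx => hone x (List.mem_of_mem_take hx)
        have honedrop : ∀ x ∈ d.drop p, 1 ≤ x :=
          fun x hx => hone x (List.mem_of_mem_drop hx)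
        have hkL : kraftL ((d.take p).map (· - 1)) = 1 := by
          rw [kraftL_map_pred _ honetake, hhalf]; norm_num
        have hkR : kraftL ((d.drop p).map (· - 1)) = 1 := by
          rw [kraftL_map_pred _ honedrop, kraftL_drop, hk, hhalf]; norm_num
        have hLlen : ((d.take p).map (· - 1)).length = p := by
          rw [List.length_map, htakelen]
        have hRlen : ((d.drop p).map (· - 1)).length = d.length - p := by
          rw [List.length_map, hdroplen]
        have getDL : ∀ i, i < p → ((d.take p).map (· - 1)).getD i 0 = d.getD i 0 - 1 := by
          intro i hi
          rw [List.getD_eq_getElem _ _ (by rw [hLlen]; omega),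
            List.getD_eq_getElem _ _ (by omega : i < d.length),
            List.getElem_map, List.getElem_take]
        have getDR : ∀ i, i < d.length - p →
            ((d.drop p).map (· - 1)).getD i 0 = d.getD (p+i) 0 - 1 := by
          intro i hi
          rw [List.getD_eq_getElem _ _ (by rw [hRlen]; omega),
            List.getD_eq_getElem _ _ (by omega : p + i < d.length),
            List.getElem_map, List.getElem_drop]
        have hCL : ∀ q, 1 ≤ q → q < ((d.take p).map (· - 1)).length → ∃ z : ℤ,
            (2:ℝ)^(min (((d.take p).map (· - 1)).getD (q-1) 0)
              (((d.take p).map (· - 1)).getD q 0)) * kraftL (((d.take p).map (· - 1)).take q)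
              = z := by
          intro q hq1 hq
          rw [hLlen] at hq
          obtain ⟨z, hz⟩ := hC q hq1 (by omega)
          refine ⟨z, ?_⟩
          have etake : ((d.take p).map (· - 1)).take q = (d.take q).map (· - 1) := by
            rw [← List.map_take, List.take_take, min_eq_left (by omega)]
          rw [getDL _ (by omega), getDL _ (by omega)]
          simp only [etake]
          rw [kraftL_map_pred _ (fun x hx => hone x (List.mem_of_mem_take hx))]
          set v := min (d.getD (q-1) 0) (d.getD q 0) with hv
          have hv1 : 1 ≤ v :=
            le_min (one_le_getD hone (by omega)) (one_le_getD hone (by omega))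
          have emin : min (d.getD (q-1) 0 - 1) (d.getD q 0 - 1) = v - 1 := by
            rw [hv]; omega
          rw [emin, ← hz]
          have h2v : (2:ℝ)^v = 2 * 2^(v-1) := by
            rw [← pow_succ']; congr 1; omega
          rw [h2v]; ring
        have hCR : ∀ q, 1 ≤ q → q < ((d.drop p).map (· - 1)).length → ∃ z : ℤ,
            (2:ℝ)^(min (((d.drop p).map (· - 1)).getD (q-1) 0)
              (((d.drop p).map (· - 1)).getD q 0)) * kraftL (((d.drop p).map (· - 1)).take q)
              = z := by
          intro q hq1 hq
          rw [hRlen] at hq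
          obtain ⟨z, hz⟩ := hC (p+q) (by omega) (by omega)
          have etake : ((d.drop p).map (· - 1)).take q = ((d.drop p).take q).map (· - 1) := by
            rw [← List.map_take]
          have ekr : kraftL ((d.drop p).take q) = kraftL (d.take (p+q)) - 1/2 := by
            have h := kraftL_append (d.take p) ((d.drop p).take q)
            rw [← List.take_add, hhalf] at h
            linarith
          rw [getDR _ (by omega), getDR _ (by omega),
            show p + (q-1) = p+q-1 by omega]
          simp only [etake]
          rw [kraftL_map_pred _ (fun x hx => honedrop x (List.mem_of_mem_take hx)), ekr]
          set v := min (d.getD (p+q-1) 0) (d.getD (p+q) 0) with hv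
          have hv1 : 1 ≤ v :=
            le_min (one_le_getD hone (by omega)) (one_le_getD hone (by omega))
          have emin : min (d.getD (p+q-1) 0 - 1) (d.getD (p+q) 0 - 1) = v - 1 := by
            rw [hv]; omega
          rw [emin]
          refine ⟨z - 2^(v-1), ?_⟩
          have h2v : (2:ℝ)^v = 2 * 2^(v-1) := by
            rw [← pow_succ']; congr 1; omega
          have hpq1 : p + q - 1 + 1 = p + q := by omega
          push_cast
          rw [← hz, h2v]
          ring
        obtain ⟨tL, htL⟩ := ih ((d.take p).map (· - 1)) (by omega) hkL hCL
        obtain ⟨tR, htR⟩ := ih ((d.drop p).map (· - 1)) (by omega) hkR hCR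
        refine ⟨BTree.node tL tR, ?_⟩
        rw [show (BTree.node tL tR).depths
            = (tL.depths.map (· + 1)) ++ (tR.depths.map (· + 1)) from rfl,
          htL, htR, map_pred_succ _ honetake, map_pred_succ _ honedrop,
          List.take_append_drop]

lemma segMin_le (l : ℕ → ℕ) {i j t : ℕ} (h1 : i ≤ t) (h2 : t ≤ j) : segMin l i j ≤ l t :=
  (Finset.fold_min_le _).mpr (Or.inr ⟨t, Finset.mem_Icc.mpr ⟨h1, h2⟩, le_refl _⟩)

lemma le_segMin (l : ℕ → ℕ) {i j c : ℕ} (h0 : c ≤ l i)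
    (h : ∀ t, i ≤ t → t ≤ j → c ≤ l t) : c ≤ segMin l i j :=
  (Finset.le_fold_min _).mpr ⟨h0, fun x hx =>
    h x (Finset.mem_Icc.mp hx).1 (Finset.mem_Icc.mp hx).2⟩

lemma nmaxim_le {l : ℕ → ℕ} {n i j c : ℕ}
    (h : ∀ h' k', 1 ≤ h' → h' ≤ i → j ≤ k' → k' ≤ n → ¬(h' = i ∧ k' = j) →
      segMin l h' k' ≤ c) :
    nmaxim l n i j ≤ c := by
  apply (Finset.fold_max_le _).mpr
  refine ⟨Nat.zero_le _, ?_⟩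
  intro x hx
  rw [Finset.mem_filter, Finset.mem_product, Finset.mem_Icc, Finset.mem_Icc] at hx
  refine h x.1 x.2 hx.1.1.1 hx.1.1.2 hx.1.2.1 hx.1.2.2 ?_
  intro ⟨ha, hb⟩
  exact hx.2 (Prod.ext ha hb)

lemma le_nmaxim {l : ℕ → ℕ} {n i j : ℕ} (h' k' : ℕ) (h1 : 1 ≤ h') (h2 : h' ≤ i)
    (h3 : j ≤ k') (h4 : k' ≤ n) (hne : ¬(h' = i ∧ k' = j)) :
    segMin l h' k' ≤ nmaxim l n i j := by
  apply (Finset.le_fold_max _).mpr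
  right
  refine ⟨(h', k'), Finset.mem_filter.mpr ⟨Finset.mem_product.mpr
    ⟨Finset.mem_Icc.mpr ⟨h1, h2⟩, Finset.mem_Icc.mpr ⟨h3, h4⟩⟩, ?_⟩, le_refl _⟩
  intro hx
  exact hne ⟨congrArg Prod.fst hx, congrArg Prod.snd hx⟩

lemma fullseg_left {l : ℕ → ℕ} {n i j : ℕ} (hf : IsFullSeg l n i j) (hi : 2 ≤ i) :
    l (i-1) ≤ nmaxim l n i j := by
  obtain ⟨h1, h2, h3, h4⟩ := hf
  have hs : segMin l (i-1) j ≤ nmaxim l n i j :=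
    le_nmaxim (i-1) j (by omega) (by omega) le_rfl h3 (by omega)
  have hlow : min (l (i-1)) (segMin l i j) ≤ segMin l (i-1) j := by
    apply le_segMin l (min_le_left _ _)
    intro t ht1 ht2
    rcases eq_or_lt_of_le ht1 with he | hlt
    · rw [← he]; exact min_le_left _ _
    · exact le_trans (min_le_right _ _) (segMin_le l (by omega) ht2)
  omega

lemma fullseg_right {l : ℕ → ℕ} {n i j : ℕ} (hf : IsFullSeg l n i j) (hj : j < n) :
    l (j+1) ≤ nmaxim l n i j := by
  obtain ⟨h1, h2, h3, h4⟩ := hf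
  have hs : segMin l i (j+1) ≤ nmaxim l n i j :=
    le_nmaxim i (j+1) h1 le_rfl (by omega) (by omega) (by omega)
  have hlow : min (l (j+1)) (segMin l i j) ≤ segMin l i (j+1) := by
    apply le_segMin l (le_trans (min_le_right _ _) (segMin_le l le_rfl h2))
    intro t ht1 ht2
    rcases eq_or_lt_of_le ht2 with he | hlt
    · rw [he]; exact min_le_left _ _
    · exact le_trans (min_le_right _ _) (segMin_le l ht1 (by omega))
  omega

lemma kraft_split (l : ℕ → ℕ) {a b c : ℕ} (h1 : a ≤ b + 1) (h2 : b ≤ c) :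
    kraft l a c = kraft l a b + kraft l (b+1) c := by
  rw [kraft, kraft, kraft, ← Finset.Ico_add_one_right_eq_Icc, ← Finset.Ico_add_one_right_eq_Icc, ← Finset.Ico_add_one_right_eq_Icc]
  rw [← Finset.sum_Ico_consecutive _ h1 (by omega : b + 1 ≤ c + 1)]

lemma kraft_single (l : ℕ → ℕ) (a : ℕ) : kraft l a a = ((2:ℝ)^(l a))⁻¹ := by
  rw [kraft, Finset.Icc_self, Finset.sum_singleton]

lemma kraft_succ (l : ℕ → ℕ) {a b : ℕ} (h : a ≤ b + 1) :
    kraft l a (b+1) = kraft l a b + ((2:ℝ)^(l (b+1)))⁻¹ := by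
  rw [kraft, kraft, Finset.sum_Icc_succ_top h]

lemma kraft_empty (l : ℕ → ℕ) {a b : ℕ} (h : b < a) : kraft l a b = 0 := by
  rw [kraft, Finset.Icc_eq_empty (by omega), Finset.sum_empty]

lemma cut_integral (l : ℕ → ℕ) (n : ℕ)
    (hpos : ∀ k ∈ Finset.Icc 1 n, 0 < l k)
    (hfull : ∀ i j : ℕ, IsFullSeg l n i j →
      ∃ z : ℤ, (2:ℝ) ^ (nmaxim l n i j) * kraft l i j = z) :
    ∀ p, 1 ≤ p → p < n → ∃ z : ℤ, (2:ℝ)^(min (l p) (l (p+1))) * kraft l 1 p = z := by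
  intro p
  induction p using Nat.strong_induction_on with
  | _ p IH =>
  intro hp1 hpn
  rcases le_or_gt (l p) (l (p+1)) with hc | hc
  · -- case 1 : v = l p
    rw [min_eq_left hc]
    rcases eq_or_lt_of_le hp1 with he | h2p
    · -- p = 1
      refine ⟨1, ?_⟩
      rw [← he, kraft_single]
      rw [mul_inv_cancel₀ (by positivity)]
      norm_num
    · -- p ≥ 2
      obtain ⟨z, hz⟩ := IH (p-1) (by omega) (by omega) (by omega)
      rw [show p - 1 + 1 = p by omega] at hz
      set w := min (l (p-1)) (l p) with hw
      have hwv : w ≤ l p := min_le_right _ _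
      refine ⟨z * 2^(l p - w) + 1, ?_⟩
      have hsplit : kraft l 1 p = kraft l 1 (p-1) + ((2:ℝ)^(l p))⁻¹ := by
        have := kraft_succ l (show 1 ≤ (p-1) + 1 by omega)
        rw [show p - 1 + 1 = p by omega] at this
        exact this
      rw [hsplit]
      have hpow : (2:ℝ)^(l p) = 2^(l p - w) * 2^w := by
        rw [← pow_add]; congr 1; omega
      push_cast
      rw [mul_add, mul_inv_cancel₀ (by positivity : ((2:ℝ)^(l p)) ≠ 0), hpow,
        mul_assoc, hz]
      ring
  · -- case 2 : v = l (p+1) < l p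
    rw [min_eq_right (le_of_lt hc)]
    set v := l (p+1) with hv
    -- find the minimal i such that all entries in [i,p] exceed v
    have hTne : p ∈ (Finset.Icc 1 p).filter (fun t => ∀ s ∈ Finset.Icc t p, v < l s) := by
      rw [Finset.mem_filter, Finset.mem_Icc]
      exact ⟨⟨hp1, le_rfl⟩, fun s hs => by
        rw [Finset.mem_Icc] at hs
        rw [show s = p by omega]
        exact hc⟩
    set T := (Finset.Icc 1 p).filter (fun t => ∀ s ∈ Finset.Icc t p, v < l s) with hT
    set i := T.min' ⟨p, hTne⟩ with hi
    have hiT : i ∈ T := T.min'_mem _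
    rw [hT, Finset.mem_filter, Finset.mem_Icc] at hiT
    obtain ⟨⟨hi1, hip⟩, hibig⟩ := hiT
    have hibig' : ∀ s, i ≤ s → s ≤ p → v < l s := fun s h1 h2 =>
      hibig s (Finset.mem_Icc.mpr ⟨h1, h2⟩)
    have hileft : i = 1 ∨ l (i-1) ≤ v := by
      by_contra hcon
      push_neg at hcon
      obtain ⟨hne1, hgt⟩ := hcon
      have : i - 1 ∈ T := by
        rw [hT, Finset.mem_filter, Finset.mem_Icc]
        refine ⟨⟨by omega, by omega⟩, fun s hs => ?_⟩
        rw [Finset.mem_Icc] at hs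
        rcases eq_or_lt_of_le hs.1 with he | hlt
        · rw [← he]; omega
        · exact hibig' s (by omega) hs.2
      have := T.min'_le _ this
      omega
    -- [i, p] is a full segment with nmaxim ≤ v
    have hm : nmaxim l n i p ≤ v := by
      apply nmaxim_le
      intro h' k' hh1 hh2 hk1 hk2 hne
      rcases eq_or_lt_of_le hk1 with he | hlt
      · -- k' = p, so h' < i, hence i ≥ 2 and l (i-1) ≤ v
        have hh' : h' < i := by
          rcases Nat.lt_or_ge h' i with h | h
          · exact h
          · omega
        rcases hileft with h1 | h1
        · omega
        · exact le_trans (segMin_le l (by omega : h' ≤ i-1) (by omega)) h1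
      · exact le_trans (segMin_le l (by omega : h' ≤ p+1) (by omega : p+1 ≤ k')) (le_of_eq hv.symm)
    have hfs : IsFullSeg l n i p := by
      refine ⟨hi1, hip, by omega, ?_⟩
      have : v + 1 ≤ segMin l i p :=
        le_segMin l (hibig' i le_rfl hip) (fun t h1 h2 => hibig' t h1 h2)
      omega
    obtain ⟨z, hz⟩ := hfull i p hfs
    have hmz : (2:ℝ)^v * kraft l i p = (2:ℝ)^(v - nmaxim l n i p) * z := by
      rw [← hz, ← mul_assoc, ← pow_add]
      congr 2
      omega
    rcases eq_or_lt_of_le hi1 with he1 | hi2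
    · -- i = 1
      rw [← he1] at hmz
      refine ⟨2^(v - nmaxim l n 1 p) * z, ?_⟩
      push_cast
      rw [hmz]
    · -- i ≥ 2
      obtain ⟨z2, hz2⟩ := IH (i-1) (by omega) (by omega) (by omega)
      set w := min (l (i-1)) (l i) with hw
      have hwv : w ≤ v := by
        have h1 : w ≤ l (i-1) := min_le_left _ _
        rcases hileft with h | h
        · omega
        · omega
      have hsplit : kraft l 1 p = kraft l 1 (i-1) + kraft l i p := by
        have := kraft_split l (show 1 ≤ (i-1)+1 by omega) (show i - 1 ≤ p by omega)
        rw [show i - 1 + 1 = i by omega] at this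
        exact this
      refine ⟨2^(v-w) * z2 + 2^(v - nmaxim l n i p) * z, ?_⟩
      rw [hsplit, mul_add, hmz]
      have hpow : (2:ℝ)^v = 2^(v-w) * 2^w := by
        rw [← pow_add]; congr 1; omega
      rw [hpow, mul_assoc]
      rw [show i - 1 + 1 = i by omega] at hz2
      rw [hz2]
      push_cast
      ring

lemma depths_prefix' (t : BTree) (p : ℕ) (hp : p < t.depths.length) :
    ∃ z : ℤ, (2:ℝ)^(t.depths.getD p 0) * kraftL (t.depths.take p) = z := by
  rw [List.getD_eq_getElem _ _ hp]
  exact depths_prefix t p hp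

lemma kraftL_range (l : ℕ → ℕ) : ∀ m, kraftL ((List.range m).map fun k => l (k+1)) = kraft l 1 m := by
  intro m
  induction m with
  | zero => rw [kraft_empty l (by omega)]; simp [kraftL]
  | succ m ih =>
      rw [List.range_succ, List.map_append, kraftL_append, ih,
        kraft_succ l (by omega : 1 ≤ m + 1)]
      simp [kraftL]

theorem path_length_sequence_characterization' (l : ℕ → ℕ) (n : ℕ) (hn : 1 ≤ n)
    (hpos : ∀ k ∈ Finset.Icc 1 n, 0 < l k)
    (hkraft : kraft l 1 n = 1) :
    (∃ t : BTree, t.depths = (List.range n).map (fun k => l (k + 1))) ↔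
      (∀ i j : ℕ, IsFullSeg l n i j →
        ∃ z : ℤ, (2:ℝ) ^ (nmaxim l n i j) * kraft l i j = z) := by
  set d := (List.range n).map (fun k => l (k+1)) with hd
  have hdlen : d.length = n := by simp [hd]
  have hdget : ∀ q, q < n → d.getD q 0 = l (q+1) := by
    intro q hq
    rw [hd, List.getD_eq_getElem _ _ (by simpa [hd] using hq)]
    simp
  have hdtake : ∀ p, p ≤ n → d.take p = (List.range p).map (fun k => l (k+1)) := by
    intro p hp
    rw [hd, ← List.map_take, List.take_range, min_eq_left hp]
  have hkr : ∀ m, m ≤ n → kraftL (d.take m) = kraft l 1 m := by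
    intro m hm
    rw [hdtake m hm, kraftL_range]
  constructor
  · rintro ⟨t, ht⟩ i j hfs
    have hP : ∀ k, 1 ≤ k → k ≤ n → ∃ z : ℤ, (2:ℝ)^(l k) * kraft l 1 (k-1) = z := by
      intro k h1 h2
      obtain ⟨z, hz⟩ := depths_prefix' t (k-1) (by rw [ht, hdlen]; omega)
      rw [ht] at hz
      rw [hdget (k-1) (by omega), show k-1+1 = k by omega, hkr (k-1) (by omega)] at hz
      exact ⟨z, hz⟩
    obtain ⟨hi1, hij, hjn, hmlt⟩ := hfs
    have hKj : ∃ zj : ℤ, (2:ℝ)^(nmaxim l n i j) * kraft l 1 j = zj := by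
      rcases eq_or_lt_of_le hjn with he | hlt
      · refine ⟨2^(nmaxim l n i j), ?_⟩
        rw [he, hkraft]
        push_cast
        ring
      · obtain ⟨z, hz⟩ := hP (j+1) (by omega) (by omega)
        rw [show j+1-1 = j by omega] at hz
        have hmj : l (j+1) ≤ nmaxim l n i j := fullseg_right ⟨hi1, hij, hjn, hmlt⟩ hlt
        refine ⟨2^(nmaxim l n i j - l (j+1)) * z, ?_⟩
        push_cast
        rw [← hz, ← mul_assoc, ← pow_add]
        congr 2
        omega
    have hKi : ∃ zi : ℤ, (2:ℝ)^(nmaxim l n i j) * kraft l 1 (i-1) = zi := by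
      rcases eq_or_lt_of_le hi1 with he | hlt
      · refine ⟨0, ?_⟩
        rw [← he, kraft_empty l (by omega)]
        push_cast
        ring
      · obtain ⟨z, hz⟩ := hP (i-1) (by omega) (by omega)
        have hstep : kraft l 1 (i-1) = kraft l 1 (i-1-1) + ((2:ℝ)^(l (i-1)))⁻¹ := by
          have := kraft_succ l (show 1 ≤ (i-1-1)+1 by omega)
          rw [show i-1-1+1 = i-1 by omega] at this
          exact this
        have hz1 : (2:ℝ)^(l (i-1)) * kraft l 1 (i-1) = z + 1 := by
          rw [hstep, mul_add, hz, mul_inv_cancel₀ (by positivity)]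
        have hmi : l (i-1) ≤ nmaxim l n i j := fullseg_left ⟨hi1, hij, hjn, hmlt⟩ (by omega)
        refine ⟨2^(nmaxim l n i j - l (i-1)) * (z + 1), ?_⟩
        push_cast
        rw [← hz1, ← mul_assoc, ← pow_add]
        congr 2
        omega
    obtain ⟨zj, hzj⟩ := hKj
    obtain ⟨zi, hzi⟩ := hKi
    refine ⟨zj - zi, ?_⟩
    have hks : kraft l i j = kraft l 1 j - kraft l 1 (i-1) := by
      have := kraft_split l (show 1 ≤ (i-1)+1 by omega) (show i-1 ≤ j by omega)
      rw [show i-1+1 = i by omega] at this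
      rw [this]
      ring
    rw [hks]
    push_cast
    linear_combination hzj - hzi
  · intro hcond
    have hC := cut_integral l n hpos hcond
    have hCd : ∀ p, 1 ≤ p → p < d.length → ∃ z : ℤ,
        (2:ℝ)^(min (d.getD (p-1) 0) (d.getD p 0)) * kraftL (d.take p) = z := by
      intro p h1 h2
      rw [hdlen] at h2
      obtain ⟨z, hz⟩ := hC p h1 h2
      refine ⟨z, ?_⟩
      rw [hdget (p-1) (by omega), hdget p (by omega), show p-1+1 = p by omega,
        hkr p (by omega)]
      exact hz
    have hkd : kraftL d = 1 := by
      rw [hd, kraftL_range, hkraft]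
    obtain ⟨t, ht⟩ := buildTree d.length d le_rfl hkd hCd
    exact ⟨t, by rw [ht]⟩

/-- Characterization: a finite nonempty sequence of positive integers with Kraft sum 1
is the path-length sequence of a topological binary tree iff for every full segment `S`,
`2^{m(S)} · K(S)` is an integer. -/
theorem path_length_sequence_characterization (l : ℕ → ℕ) (n : ℕ) (hn : 1 ≤ n)
    (hpos : ∀ k ∈ Finset.Icc 1 n, 0 < l k)
    (hkraft : kraft l 1 n = 1) :
    (∃ t : BTree, t.depths = (List.range n).map (fun k => l (k + 1))) ↔
      (∀ i j : ℕ, IsFullSeg l n i j →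
        ∃ z : ℤ, (2:ℝ) ^ (nmaxim l n i j) * kraft l i j = z) :=
  path_length_sequence_characterization' l n hn hpos hkraft
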